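/- Let A, B ⊂ B(H) be C*-algebras with A ⊆_γ B for some γ > 0, and suppose A has length at most ℓ with length constant at most K. Then for all n ∈ ℕ, A ⊗ M_n ⊆_μ B ⊗ M_n where μ = K((1+γ)^ℓ − 1). -/

import Mathlib

/-- The near inclusion `A ⊆_γ B`: every element of the closed unit ball of `A` lies within
distance `γ` of some element of `B`. -/
def nearIncl {E : Type*} [NormedRing E] (A B : Set E) (γ : ℝ) : Prop :=
  ∀ x ∈ A, ‖x‖ ≤ 1 → ∃ y ∈ B, ‖x - y‖ ≤ γ

/-- The Kadison–Kastler distance between two subsets of a C*-algebra: the infimum of all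
`γ > 0` such that each element of the unit ball of either set is within `γ` of an element
of the unit ball of the other. -/
noncomputable def kkDist {E : Type*} [NormedRing E] (A B : Set E) : ℝ :=
  sInf {γ : ℝ | 0 < γ ∧
    (∀ x ∈ A, ‖x‖ ≤ 1 → ∃ y ∈ B, ‖y‖ ≤ 1 ∧ ‖x - y‖ < γ) ∧
    (∀ y ∈ B, ‖y‖ ≤ 1 → ∃ x ∈ A, ‖x‖ ≤ 1 ∧ ‖y - x‖ < γ)}

/-- The bounded operator on the Hilbert space `ℓ²`-direct sum `H ⊕ ⋯ ⊕ H` associated to an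
`n × n` matrix of bounded operators on `H`. -/
noncomputable def matCLM {H : Type*} [NormedAddCommGroup H] [InnerProductSpace ℂ H]
    [CompleteSpace H] {n : ℕ} (x : Matrix (Fin n) (Fin n) (H →L[ℂ] H)) :
    (PiLp 2 fun _ : Fin n => H) →L[ℂ] (PiLp 2 fun _ : Fin n => H) :=
  ((PiLp.continuousLinearEquiv 2 ℂ fun _ : Fin n => H).symm.toContinuousLinearMap) ∘L
    (ContinuousLinearMap.pi fun i => ∑ j, (x i j) ∘L (ContinuousLinearMap.proj j)) ∘L
    ((PiLp.continuousLinearEquiv 2 ℂ fun _ : Fin n => H).toContinuousLinearMap)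

/-- The C*-norm of a matrix of bounded operators, i.e. the operator norm of its action on the
`ℓ²`-direct sum. -/
noncomputable def matNorm {H : Type*} [NormedAddCommGroup H] [InnerProductSpace ℂ H]
    [CompleteSpace H] {n : ℕ} (x : Matrix (Fin n) (Fin n) (H →L[ℂ] H)) : ℝ :=
  ‖matCLM x‖

/-- Pad an `n × n` matrix to an `N × N` matrix by filling with zeros. -/
def padMat {E : Type*} [Zero E] {n N : ℕ} (x : Matrix (Fin n) (Fin n) E) :
    Matrix (Fin N) (Fin N) E :=
  Matrix.of fun i j => if h : (i : ℕ) < n ∧ (j : ℕ) < n then x ⟨i, h.1⟩ ⟨j, h.2⟩ else 0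

/-- A (concretely represented) C*-algebra `A ⊆ B(H)` has length at most `ℓ` with length
constant at most `K`: every matrix `x` over `A` factors as
`x = λ₀ d₁ λ₁ ⋯ d_ℓ λ_ℓ` with the `λ`'s scalar matrices, the `d`'s diagonal matrices over `A`,
and `(∏ ‖λᵢ‖)(∏ ‖dᵢ‖) ≤ K ‖x‖` (rectangular scalar matrices are padded to square ones). -/
def LengthLE {H : Type*} [NormedAddCommGroup H] [InnerProductSpace ℂ H] [CompleteSpace H]
    (A : StarSubalgebra ℂ (H →L[ℂ] H)) (ℓ : ℕ) (K : ℝ) : Prop :=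
  ∀ (n : ℕ) (x : Matrix (Fin n) (Fin n) (H →L[ℂ] H)), (∀ i j, x i j ∈ A) →
    ∃ N : ℕ, n ≤ N ∧
    ∃ (lam : Fin (ℓ + 1) → Matrix (Fin N) (Fin N) (H →L[ℂ] H))
      (d : Fin ℓ → Fin N → (H →L[ℂ] H)),
      (∀ k i j, ∃ c : ℂ, lam k i j = c • (1 : H →L[ℂ] H)) ∧
      (∀ i j, d i j ∈ A) ∧
      ((List.finRange ℓ).map fun i => lam i.castSucc * Matrix.diagonal (d i)).prod *
          lam (Fin.last ℓ) = padMat x ∧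
      (∏ k, matNorm (lam k)) * (∏ i, matNorm (Matrix.diagonal (d i))) ≤ K * matNorm x

section Helpers
set_option synthInstance.maxHeartbeats 1000000
set_option maxHeartbeats 2000000
set_option linter.unusedSectionVars false


-- abstract list lemmas
lemma myListProdNonneg : ∀ (L : List ℝ), (∀ r ∈ L, (0:ℝ) ≤ r) → 0 ≤ L.prod
  | [], _ => by simp
  | r :: t, h => by
    simp only [List.prod_cons]
    exact mul_nonneg (h r (by simp)) (myListProdNonneg t fun s hs => h s (by simp [hs]))

lemma myListProdNormLe {E : Type*} [NormedRing E] (h1 : ‖(1:E)‖ ≤ 1)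
    {ι : Type*} (g : ι → E) (c : ι → ℝ) (hg : ∀ i, ‖g i‖ ≤ c i) (hc : ∀ i, 0 ≤ c i) :
    ∀ L : List ι, ‖(L.map g).prod‖ ≤ (L.map c).prod
  | [] => by simpa using h1
  | i :: t => by
    simp only [List.map_cons, List.prod_cons]
    exact (norm_mul_le _ _).trans
      (mul_le_mul (hg i) (myListProdNormLe h1 g c hg hc t) (norm_nonneg _) (hc i))

lemma myListProdMapConstMul {ι : Type*} (k : ℝ) (a : ι → ℝ) :
    ∀ L : List ι, (L.map fun i => k * a i).prod = k ^ L.length * (L.map a).prod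
  | [] => by simp
  | i :: t => by
    simp only [List.map_cons, List.prod_cons, List.length_cons, myListProdMapConstMul k a t]
    ring

lemma mySqLe {a b : ℝ} (h : a^2 ≤ b^2) (hb : 0 ≤ b) : a ≤ b := by
  nlinarith [sq_nonneg (a - b), sq_nonneg (a + b)]

lemma myTele {E : Type*} [NormedRing E] (h1 : ‖(1:E)‖ ≤ 1) {ι : Type*}
    (γ : ℝ) (hγ : 0 ≤ γ) (f g : ι → E) (a : ι → ℝ)
    (ha : ∀ i, 0 ≤ a i) (hf : ∀ i, ‖f i‖ ≤ a i) (hfg : ∀ i, ‖f i - g i‖ ≤ γ * a i) :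
    ∀ L : List ι, ‖(L.map f).prod - (L.map g).prod‖
      ≤ (L.map a).prod * ((1+γ)^L.length - 1)
  | [] => by simp
  | i :: t => by
    have hg' : ∀ i, ‖g i‖ ≤ (1+γ) * a i := fun i => by
      calc ‖g i‖ = ‖f i - (f i - g i)‖ := by rw [sub_sub_cancel]
        _ ≤ ‖f i‖ + ‖f i - g i‖ := norm_sub_le _ _
        _ ≤ (1+γ) * a i := by nlinarith [hf i, hfg i]
    have hT : (0:ℝ) ≤ (t.map a).prod := myListProdNonneg _ (by
      intro r hr; obtain ⟨i, _, rfl⟩ := List.mem_map.1 hr; exact ha i)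
    have hQ : ‖(t.map g).prod‖ ≤ (1+γ)^t.length * (t.map a).prod := by
      have := myListProdNormLe h1 g (fun i => (1+γ) * a i) hg'
        (fun i => mul_nonneg (by linarith) (ha i)) t
      rwa [myListProdMapConstMul] at this
    have ih := myTele h1 γ hγ f g a ha hf hfg t
    simp only [List.map_cons, List.prod_cons, List.length_cons]
    have key : f i * (t.map f).prod - g i * (t.map g).prod
        = f i * ((t.map f).prod - (t.map g).prod) + (f i - g i) * (t.map g).prod := by
      noncomm_ring
    rw [key]
    calc ‖_ + _‖ ≤ ‖f i * ((t.map f).prod - (t.map g).prod)‖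
          + ‖(f i - g i) * (t.map g).prod‖ := norm_add_le _ _
      _ ≤ a i * ((t.map a).prod * ((1+γ)^t.length - 1))
          + (γ * a i) * ((1+γ)^t.length * (t.map a).prod) := by
        gcongr
        · exact (norm_mul_le _ _).trans (mul_le_mul (hf i) ih (norm_nonneg _) (ha i))
        · exact (norm_mul_le _ _).trans (mul_le_mul (hfg i) hQ (norm_nonneg _)
            (mul_nonneg hγ (ha i)))
      _ = a i * (t.map a).prod * ((1+γ)^(t.length+1) - 1) := by rw [pow_succ]; ring

variable {H : Type*} [NormedAddCommGroup H] [InnerProductSpace ℂ H] [CompleteSpace H] {n N : ℕ}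

lemma matCLM_apply (x : Matrix (Fin n) (Fin n) (H →L[ℂ] H)) (v : PiLp 2 fun _ : Fin n => H)
    (i : Fin n) : matCLM x v i = ∑ j, x i j (v j) := by
  simp [matCLM]

lemma matCLM_one : matCLM (1 : Matrix (Fin n) (Fin n) (H →L[ℂ] H)) = 1 := by
  ext v i
  rw [matCLM_apply, Finset.sum_eq_single i]
  · simp [Matrix.one_apply]
  · intro j _ hj; simp [Matrix.one_apply, (Ne.symm hj)]
  · simp

lemma matCLM_mul (x y : Matrix (Fin n) (Fin n) (H →L[ℂ] H)) :
    matCLM (x * y) = matCLM x * matCLM y := by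
  ext v i
  rw [ContinuousLinearMap.mul_apply, matCLM_apply, matCLM_apply]
  simp only [Matrix.mul_apply, ContinuousLinearMap.sum_apply, ContinuousLinearMap.mul_apply]
  rw [Finset.sum_comm]
  congr 1; ext j
  rw [matCLM_apply, map_sum]

lemma matCLM_sub (x y : Matrix (Fin n) (Fin n) (H →L[ℂ] H)) :
    matCLM (x - y) = matCLM x - matCLM y := by
  ext v i
  simp [matCLM_apply, Matrix.sub_apply, Finset.sum_sub_distrib]

lemma matCLM_list_prod : ∀ L : List (Matrix (Fin n) (Fin n) (H →L[ℂ] H)),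
    matCLM L.prod = (L.map matCLM).prod
  | [] => by simpa using matCLM_one
  | x :: t => by
    simp only [List.prod_cons, List.map_cons, matCLM_mul, matCLM_list_prod t]

lemma matNorm_mul_le (x y : Matrix (Fin n) (Fin n) (H →L[ℂ] H)) :
    matNorm (x * y) ≤ matNorm x * matNorm y := by
  rw [matNorm, matCLM_mul]; exact norm_mul_le (matCLM x) (matCLM y)

lemma matNorm_nonneg (x : Matrix (Fin n) (Fin n) (H →L[ℂ] H)) : 0 ≤ matNorm x := by
  rw [matNorm]; exact norm_nonneg (matCLM x)

lemma matCLM_diagonal_apply (e : Fin n → (H →L[ℂ] H)) (v : PiLp 2 fun _ : Fin n => H)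
    (i : Fin n) : matCLM (Matrix.diagonal e) v i = e i (v i) := by
  rw [matCLM_apply, Finset.sum_eq_single i]
  · simp
  · intro j _ hj; simp [Matrix.diagonal_apply_ne' _ hj]
  · simp

lemma myCoordLe (w : PiLp 2 fun _ : Fin n => H) (j : Fin n) : ‖w j‖ ≤ ‖w‖ := by
  have h : ‖w j‖^2 ≤ ‖w‖^2 := by
    rw [PiLp.norm_sq_eq_of_L2]
    exact Finset.single_le_sum (f := fun i => ‖w i‖^2) (fun i _ => sq_nonneg _) (Finset.mem_univ j)
  exact mySqLe h (norm_nonneg w)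

lemma matNorm_diagonal_le (e : Fin n → (H →L[ℂ] H)) (c : ℝ) (hc : 0 ≤ c)
    (he : ∀ j, ‖e j‖ ≤ c) : matNorm (Matrix.diagonal e) ≤ c := by
  rw [matNorm]
  refine ContinuousLinearMap.opNorm_le_bound _ hc fun v => ?_
  have h : ‖matCLM (Matrix.diagonal e) v‖^2 ≤ (c * ‖v‖)^2 := by
    rw [PiLp.norm_sq_eq_of_L2, mul_pow, PiLp.norm_sq_eq_of_L2, Finset.mul_sum]
    refine Finset.sum_le_sum fun i _ => ?_
    rw [matCLM_diagonal_apply, ← mul_pow]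
    refine pow_le_pow_left₀ (norm_nonneg _) ?_ 2
    exact ((e i).le_opNorm (v i)).trans (mul_le_mul_of_nonneg_right (he i) (norm_nonneg _))
  exact mySqLe h (mul_nonneg hc (norm_nonneg v))

lemma matNorm_diagonal_entry_le (e : Fin n → (H →L[ℂ] H)) (j : Fin n) :
    ‖e j‖ ≤ matNorm (Matrix.diagonal e) := by
  refine ContinuousLinearMap.opNorm_le_bound _ (matNorm_nonneg _) fun u => ?_
  set v : PiLp 2 fun _ : Fin n => H := WithLp.toLp 2 (fun i => if i = j then u else 0) with hv
  have hvj : v j = u := by simp [hv]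
  have hvn : ‖v‖ = ‖u‖ := by
    have h2 : ‖v‖^2 = ‖u‖^2 := by
      rw [PiLp.norm_sq_eq_of_L2]
      rw [Finset.sum_eq_single j]
      · simp [hv]
      · intro i _ hi; simp [hv, hi]
      · simp
    have := congrArg Real.sqrt h2
    rwa [Real.sqrt_sq (norm_nonneg _), Real.sqrt_sq (norm_nonneg _)] at this
  calc ‖e j u‖ = ‖matCLM (Matrix.diagonal e) v j‖ := by rw [matCLM_diagonal_apply, hvj]
    _ ≤ ‖matCLM (Matrix.diagonal e) v‖ := myCoordLe _ j
    _ ≤ ‖matCLM (Matrix.diagonal e)‖ * ‖v‖ := ContinuousLinearMap.le_opNorm _ _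
    _ = matNorm (Matrix.diagonal e) * ‖u‖ := by rw [hvn, matNorm]

lemma matNorm_corner_le (h : n ≤ N) (X : Matrix (Fin N) (Fin N) (H →L[ℂ] H)) :
    matNorm (Matrix.of fun i j => X (Fin.castLE h i) (Fin.castLE h j)) ≤ matNorm X := by
  rw [matNorm]
  refine ContinuousLinearMap.opNorm_le_bound _ (matNorm_nonneg X) fun v => ?_
  set V : PiLp 2 fun _ : Fin N => H :=
    WithLp.toLp 2 (fun (I : Fin N) => if hI : (I : ℕ) < n then v ⟨I, hI⟩ else 0) with hV
  have hmem : ∀ I : Fin N, I ∈ Finset.univ.map (Fin.castLEEmb h) ↔ (I : ℕ) < n := by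
    intro I
    simp only [Finset.mem_map, Finset.mem_univ, true_and]
    constructor
    · rintro ⟨i, rfl⟩; simpa using i.2
    · intro hI; exact ⟨⟨I, hI⟩, by ext; simp⟩
  have hVc : ∀ i : Fin n, V (Fin.castLE h i) = v i := by
    intro i
    have : ((Fin.castLE h i : Fin N) : ℕ) < n := by simpa using i.2
    simp only [hV, WithLp.ofLp_toLp, dif_pos this]
    rfl
  have hVn : ‖V‖ = ‖v‖ := by
    have h2 : ‖V‖^2 = ‖v‖^2 := by
      rw [PiLp.norm_sq_eq_of_L2, PiLp.norm_sq_eq_of_L2]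
      rw [← Finset.sum_subset (Finset.subset_univ (Finset.univ.map (Fin.castLEEmb h)))
        (fun I _ hI => ?_), Finset.sum_map]
      · refine Finset.sum_congr rfl fun i _ => ?_
        rw [Fin.coe_castLEEmb, hVc]
      · rw [hmem] at hI
        simp [hV, dif_neg hI]
    have := congrArg Real.sqrt h2
    rwa [Real.sqrt_sq (norm_nonneg _), Real.sqrt_sq (norm_nonneg _)] at this
  have hco : ∀ i : Fin n,
      matCLM (Matrix.of fun i j => X (Fin.castLE h i) (Fin.castLE h j)) v i
        = matCLM X V (Fin.castLE h i) := by
    intro i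
    rw [matCLM_apply, matCLM_apply]
    rw [← Finset.sum_subset (Finset.subset_univ (Finset.univ.map (Fin.castLEEmb h)))
      (fun J _ hJ => ?_), Finset.sum_map]
    · refine Finset.sum_congr rfl fun j _ => ?_
      rw [Fin.coe_castLEEmb, hVc]
      rfl
    · rw [hmem] at hJ
      have : V J = 0 := by simp [hV, dif_neg hJ]
      rw [this, map_zero]
  have hsq : ‖matCLM (Matrix.of fun i j => X (Fin.castLE h i) (Fin.castLE h j)) v‖^2
      ≤ ‖matCLM X V‖^2 := by
    rw [PiLp.norm_sq_eq_of_L2, PiLp.norm_sq_eq_of_L2]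
    calc ∑ i : Fin n, ‖matCLM (Matrix.of fun i j => X (Fin.castLE h i) (Fin.castLE h j)) v i‖^2
        = ∑ i : Fin n, ‖matCLM X V (Fin.castLE h i)‖^2 := by
          refine Finset.sum_congr rfl fun i _ => ?_; rw [hco]
      _ = ∑ I ∈ Finset.univ.map (Fin.castLEEmb h), ‖matCLM X V I‖^2 := by
          rw [Finset.sum_map]; rfl
      _ ≤ ∑ I : Fin N, ‖matCLM X V I‖^2 :=
          Finset.sum_le_sum_of_subset_of_nonneg (Finset.subset_univ _)
            (fun I _ _ => sq_nonneg _)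
  have hfin : ‖matCLM X V‖ ≤ matNorm X * ‖v‖ := by
    rw [← hVn, matNorm]; exact ContinuousLinearMap.le_opNorm _ _
  refine mySqLe ?_ (mul_nonneg (matNorm_nonneg X) (norm_nonneg v))
  calc _ ≤ ‖matCLM X V‖^2 := hsq
    _ ≤ (matNorm X * ‖v‖)^2 := pow_le_pow_left₀ (norm_nonneg _) hfin 2

lemma padMat_corner {E : Type*} [Zero E] (h : n ≤ N) (x : Matrix (Fin n) (Fin n) E)
    (i j : Fin n) : (padMat x : Matrix (Fin N) (Fin N) E) (Fin.castLE h i) (Fin.castLE h j)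
      = x i j := by
  have hi : ((Fin.castLE h i : Fin N) : ℕ) < n := by simpa using i.2
  have hj : ((Fin.castLE h j : Fin N) : ℕ) < n := by simpa using j.2
  simp only [padMat, Matrix.of_apply, dif_pos (And.intro hi hj)]
  have e1 : (⟨((Fin.castLE h i : Fin N) : ℕ), hi⟩ : Fin n) = i := by ext; simp
  have e2 : (⟨((Fin.castLE h j : Fin N) : ℕ), hj⟩ : Fin n) = j := by ext; simp
  rw [e1, e2]

-- membership lemmas
section memB
variable (B : NonUnitalStarSubalgebra ℂ (H →L[ℂ] H))

lemma mem_mul_scalar {M lam : Matrix (Fin N) (Fin N) (H →L[ℂ] H)}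
    (hM : ∀ i j, M i j ∈ B) (hlam : ∀ i j, ∃ c : ℂ, lam i j = c • (1 : H →L[ℂ] H)) :
    ∀ i j, (M * lam) i j ∈ B := by
  intro i j
  rw [Matrix.mul_apply]
  refine sum_mem fun k _ => ?_
  obtain ⟨c, hc⟩ := hlam k j
  rw [hc, mul_smul_comm, mul_one]
  exact SMulMemClass.smul_mem c (hM i k)

lemma mem_scalar_mul_diag {lam : Matrix (Fin N) (Fin N) (H →L[ℂ] H)}
    {b : Fin N → (H →L[ℂ] H)}
    (hlam : ∀ i j, ∃ c : ℂ, lam i j = c • (1 : H →L[ℂ] H)) (hb : ∀ j, b j ∈ B) :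
    ∀ i j, (lam * Matrix.diagonal b) i j ∈ B := by
  intro i j
  rw [Matrix.mul_apply]
  refine sum_mem fun k _ => ?_
  obtain ⟨c, hc⟩ := hlam i k
  rcases eq_or_ne k j with rfl | hk
  · rw [Matrix.diagonal_apply_eq, hc, smul_mul_assoc, one_mul]
    exact SMulMemClass.smul_mem c (hb k)
  · rw [Matrix.diagonal_apply_ne _ hk, mul_zero]
    exact zero_mem _

lemma mem_list_prod : ∀ L : List (Matrix (Fin N) (Fin N) (H →L[ℂ] H)), L ≠ [] →
    (∀ M ∈ L, ∀ i j, M i j ∈ B) → ∀ i j, L.prod i j ∈ B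
  | [], h, _ => absurd rfl h
  | [M], _, hm => by simpa using hm M (by simp)
  | M :: M' :: t, _, hm => by
    have ht := mem_list_prod (M' :: t) (by simp) (fun P hP => hm P (by simp [hP]))
    rw [List.prod_cons]
    intro i j
    rw [Matrix.mul_apply]
    exact sum_mem fun k _ => mul_mem (hm M (by simp) i k) (ht k j)

end memB


lemma clm_norm_mul_le {F : Type*} [NormedAddCommGroup F] [NormedSpace ℂ F]
    (f g : F →L[ℂ] F) : ‖f * g‖ ≤ ‖f‖ * ‖g‖ :=
  ContinuousLinearMap.opNorm_comp_le f g

lemma approx_mem {H : Type*} [NormedAddCommGroup H] [InnerProductSpace ℂ H] [CompleteSpace H]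
    {A : StarSubalgebra ℂ (H →L[ℂ] H)} {B : NonUnitalStarSubalgebra ℂ (H →L[ℂ] H)}
    {γ : ℝ} (hγ : 0 < γ)
    (hAB : nearIncl (A : Set (H →L[ℂ] H)) (B : Set (H →L[ℂ] H)) γ) :
    ∀ a ∈ A, ∃ b ∈ B, ‖a - b‖ ≤ γ * ‖a‖ := by
  intro a ha
  rcases eq_or_ne a 0 with rfl | h0
  · exact ⟨0, B.zero_mem, by simp⟩
  · have hr : (0:ℝ) < ‖a‖ := norm_pos_iff.mpr h0
    have hrc : ((‖a‖ : ℂ)) ≠ 0 := by exact_mod_cast hr.ne'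
    set u := (‖a‖ : ℂ)⁻¹ • a with hu
    have huA : u ∈ A := A.smul_mem ha _
    have hun : ‖u‖ ≤ 1 := by
      rw [hu, norm_smul, norm_inv]
      have : ‖((‖a‖ : ℂ))‖ = ‖a‖ := by
        rw [Complex.norm_real]; exact abs_of_nonneg (norm_nonneg a)
      rw [this, inv_mul_cancel₀ hr.ne']
    obtain ⟨z, hzB, hz⟩ := hAB u huA hun
    refine ⟨(‖a‖ : ℂ) • z, SMulMemClass.smul_mem _ hzB, ?_⟩
    have hdiff : a - (‖a‖:ℂ) • z = (‖a‖:ℂ) • (u - z) := by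
      rw [smul_sub, hu, smul_inv_smul₀ hrc]
    rw [hdiff, norm_smul]
    have hnr : ‖((‖a‖ : ℂ))‖ = ‖a‖ := by
      rw [Complex.norm_real]; exact abs_of_nonneg (norm_nonneg a)
    rw [hnr]
    calc ‖a‖ * ‖u - z‖ ≤ ‖a‖ * γ := mul_le_mul_of_nonneg_left hz hr.le
      _ = γ * ‖a‖ := mul_comm _ _

end Helpers

set_option synthInstance.maxHeartbeats 1000000 in
set_option maxHeartbeats 2000000 in
/-- Proposition 2.9: if `A ⊆_γ B` and `A` has length at most `ℓ` with length constant at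
most `K`, then `A ⊗ M_n ⊆_μ B ⊗ M_n` for all `n`, where `μ = K((1+γ)^ℓ - 1)`. -/
theorem matrix_nearIncl_of_lengthLE {H : Type*} [NormedAddCommGroup H]
    [InnerProductSpace ℂ H] [CompleteSpace H]
    (A : StarSubalgebra ℂ (H →L[ℂ] H)) (B : NonUnitalStarSubalgebra ℂ (H →L[ℂ] H))
    (γ : ℝ) (hγ : 0 < γ) (ℓ : ℕ) (K : ℝ) (hℓ : 1 ≤ ℓ) (hK : 1 ≤ K)
    (hAB : nearIncl (A : Set (H →L[ℂ] H)) (B : Set (H →L[ℂ] H)) γ)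
    (hlen : LengthLE A ℓ K) :
    ∀ (n : ℕ) (x : Matrix (Fin n) (Fin n) (H →L[ℂ] H)), (∀ i j, x i j ∈ A) →
      matNorm x ≤ 1 →
      ∃ y : Matrix (Fin n) (Fin n) (H →L[ℂ] H), (∀ i j, y i j ∈ B) ∧
        matNorm (x - y) ≤ K * ((1 + γ) ^ ℓ - 1) := by
  intro n x hxA hx1
  obtain ⟨N, hnN, lam, d, hlam, hd, hfac, hbound⟩ := hlen n x hxA
  choose b hbB hb using fun (i : Fin ℓ) (j : Fin N) =>
    approx_mem hγ hAB (d i j) (hd i j)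
  set Y := ((List.finRange ℓ).map fun i => lam i.castSucc * Matrix.diagonal (b i)).prod *
      lam (Fin.last ℓ) with hY
  set y := Matrix.of fun i j => Y (Fin.castLE hnN i) (Fin.castLE hnN j) with hy
  have hYmem : ∀ i j, Y i j ∈ B := by
    refine mem_mul_scalar B ?_ (hlam (Fin.last ℓ))
    refine mem_list_prod B _ ?_ ?_
    · refine List.ne_nil_of_length_pos ?_
      rw [List.length_map, List.length_finRange]; omega
    · intro M hM i j
      obtain ⟨i0, _, rfl⟩ := List.mem_map.1 hM
      exact mem_scalar_mul_diag B (hlam _) (hbB i0) i j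
  refine ⟨y, fun i j => hYmem _ _, ?_⟩
  -- telescoping estimate
  have h1 : ‖(1 : (PiLp 2 fun _ : Fin N => H) →L[ℂ] (PiLp 2 fun _ : Fin N => H))‖ ≤ 1 := by
    rw [ContinuousLinearMap.one_def]; exact ContinuousLinearMap.norm_id_le
  set a : Fin ℓ → ℝ := fun i => matNorm (lam i.castSucc) * matNorm (Matrix.diagonal (d i))
    with haDef
  have ha : ∀ i, 0 ≤ a i := fun i => mul_nonneg (matNorm_nonneg _) (matNorm_nonneg _)
  set f : Fin ℓ → ((PiLp 2 fun _ : Fin N => H) →L[ℂ] (PiLp 2 fun _ : Fin N => H)) :=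
    fun i => matCLM (lam i.castSucc * Matrix.diagonal (d i)) with hfDef
  set g : Fin ℓ → ((PiLp 2 fun _ : Fin N => H) →L[ℂ] (PiLp 2 fun _ : Fin N => H)) :=
    fun i => matCLM (lam i.castSucc * Matrix.diagonal (b i)) with hgDef
  have hf : ∀ i, ‖f i‖ ≤ a i := fun i => by
    rw [hfDef]
    simp only
    rw [matCLM_mul]
    exact norm_mul_le (matCLM (lam i.castSucc)) (matCLM (Matrix.diagonal (d i)))
  have hdiagdiff : ∀ i, matNorm (Matrix.diagonal (d i) - Matrix.diagonal (b i))
      ≤ γ * matNorm (Matrix.diagonal (d i)) := fun i => by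
    rw [Matrix.diagonal_sub]
    refine matNorm_diagonal_le _ _ (mul_nonneg hγ.le (matNorm_nonneg _)) fun j => ?_
    exact (hb i j).trans (mul_le_mul_of_nonneg_left (matNorm_diagonal_entry_le (d i) j) hγ.le)
  have hfg : ∀ i, ‖f i - g i‖ ≤ γ * a i := fun i => by
    have hfgeq : f i - g i
        = matCLM (lam i.castSucc * (Matrix.diagonal (d i) - Matrix.diagonal (b i))) := by
      rw [hfDef, hgDef]
      simp only
      rw [mul_sub, matCLM_sub]
    rw [hfgeq]
    calc ‖matCLM (lam i.castSucc * (Matrix.diagonal (d i) - Matrix.diagonal (b i)))‖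
        ≤ matNorm (lam i.castSucc) * matNorm (Matrix.diagonal (d i) - Matrix.diagonal (b i)) :=
          matNorm_mul_le _ _
      _ ≤ matNorm (lam i.castSucc) * (γ * matNorm (Matrix.diagonal (d i))) :=
          mul_le_mul_of_nonneg_left (hdiagdiff i) (matNorm_nonneg _)
      _ = γ * a i := by simp only [haDef]; ring
  have htele := myTele h1 γ hγ.le f g a ha hf hfg (List.finRange ℓ)
  have hPd : matCLM (((List.finRange ℓ).map fun i =>
        lam i.castSucc * Matrix.diagonal (d i)).prod)
      = ((List.finRange ℓ).map f).prod := by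
    rw [matCLM_list_prod, List.map_map]; rfl
  have hPb : matCLM (((List.finRange ℓ).map fun i =>
        lam i.castSucc * Matrix.diagonal (b i)).prod)
      = ((List.finRange ℓ).map g).prod := by
    rw [matCLM_list_prod, List.map_map]; rfl
  have hcorner : x - y = Matrix.of fun i j =>
      ((padMat x : Matrix (Fin N) (Fin N) (H →L[ℂ] H)) - Y)
        (Fin.castLE hnN i) (Fin.castLE hnN j) := by
    refine Matrix.ext fun i j => ?_
    show x i j - y i j
      = (padMat x : Matrix (Fin N) (Fin N) (H →L[ℂ] H)) (Fin.castLE hnN i) (Fin.castLE hnN j)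
        - Y (Fin.castLE hnN i) (Fin.castLE hnN j)
    rw [padMat_corner hnN]
    rfl
  have hstep1 : matNorm (x - y) ≤ matNorm ((padMat x : Matrix (Fin N) (Fin N) _) - Y) := by
    rw [hcorner]; exact matNorm_corner_le hnN _
  have hprodsplit : ((List.finRange ℓ).map a).prod = ∏ i, a i := by
    rw [← List.ofFn_eq_map, List.prod_ofFn]
  have hmain : matNorm ((padMat x : Matrix (Fin N) (Fin N) _) - Y) ≤
      ((∏ i, a i) * ((1+γ)^ℓ - 1)) * matNorm (lam (Fin.last ℓ)) := by
    rw [matNorm, ← hfac, hY, matCLM_sub, matCLM_mul, matCLM_mul, hPd, hPb, ← sub_mul]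
    calc ‖(((List.finRange ℓ).map f).prod - ((List.finRange ℓ).map g).prod) *
          matCLM (lam (Fin.last ℓ))‖
        ≤ ‖((List.finRange ℓ).map f).prod - ((List.finRange ℓ).map g).prod‖ *
          ‖matCLM (lam (Fin.last ℓ))‖ := clm_norm_mul_le _ _
      _ ≤ (((List.finRange ℓ).map a).prod * ((1+γ)^(List.finRange ℓ).length - 1)) *
          ‖matCLM (lam (Fin.last ℓ))‖ :=
          mul_le_mul_of_nonneg_right htele (matNorm_nonneg (lam (Fin.last ℓ)))
      _ = ((∏ i, a i) * ((1+γ)^ℓ - 1)) * matNorm (lam (Fin.last ℓ)) := by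
          rw [hprodsplit, List.length_finRange]; rfl
  have hsplit2 : (∏ i, a i)
      = (∏ i : Fin ℓ, matNorm (lam i.castSucc)) * ∏ i, matNorm (Matrix.diagonal (d i)) :=
    Finset.prod_mul_distrib
  have hlamsplit : (∏ k : Fin (ℓ+1), matNorm (lam k))
      = (∏ i : Fin ℓ, matNorm (lam i.castSucc)) * matNorm (lam (Fin.last ℓ)) :=
    Fin.prod_univ_castSucc _
  have hKx : (∏ i : Fin ℓ, matNorm (lam i.castSucc)) * matNorm (lam (Fin.last ℓ)) *
      (∏ i, matNorm (Matrix.diagonal (d i))) ≤ K * matNorm x := by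
    rw [← hlamsplit]; exact hbound
  have hc0 : (0:ℝ) ≤ (1+γ)^ℓ - 1 := by
    have : (1:ℝ) ≤ (1+γ)^ℓ := one_le_pow₀ (by linarith)
    linarith
  calc matNorm (x - y) ≤ ((∏ i, a i) * ((1+γ)^ℓ - 1)) * matNorm (lam (Fin.last ℓ)) :=
        hstep1.trans hmain
    _ = ((∏ i : Fin ℓ, matNorm (lam i.castSucc)) * matNorm (lam (Fin.last ℓ)) *
        (∏ i, matNorm (Matrix.diagonal (d i)))) * ((1+γ)^ℓ - 1) := by
        rw [hsplit2]; ring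
    _ ≤ (K * matNorm x) * ((1+γ)^ℓ - 1) := mul_le_mul_of_nonneg_right hKx hc0
    _ = (K * ((1+γ)^ℓ - 1)) * matNorm x := by ring
    _ ≤ (K * ((1+γ)^ℓ - 1)) * 1 :=
        mul_le_mul_of_nonneg_left hx1 (mul_nonneg (by linarith) hc0)
    _ = K * ((1 + γ) ^ ℓ - 1) := mul_one _
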